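/- Let G be a simple graph with at most m edges and with no cycle of length strictly less than ℓ. Then for every positive integer α, the number of distinct cycles of G (identified with their edge sets) of length at most α·ℓ is at most (2m)^{2α}. -/

import Mathlib

namespace SimpleGraph.Walk
variable {V : Type*} {G : SimpleGraph V}

/-- Take the first `n` steps of a walk. -/
def takeW {u v : V} : (p : G.Walk u v) → (n : ℕ) → G.Walk u (p.getVert n)
  | p, 0 => Walk.nil.copy rfl (getVert_zero p).symm
  | .nil, _+1 => .nil
  | .cons h q, n+1 => Walk.cons h (takeW q n)

@[simp] lemma darts_takeW {u v : V} : (p : G.Walk u v) → (n : ℕ) →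
    (p.takeW n).darts = p.darts.take n
  | p, 0 => by cases p <;> simp [takeW]
  | .nil, _+1 => by simp [takeW]
  | .cons h q, n+1 => by simp [takeW, darts_takeW q n]

@[simp] lemma support_takeW {u v : V} : (p : G.Walk u v) → (n : ℕ) →
    (p.takeW n).support = p.support.take (n+1)
  | p, 0 => by cases p <;> simp [takeW]
  | .nil, _+1 => by simp [takeW]
  | .cons h q, n+1 => by simp [takeW, support_takeW q n]

lemma getVert_drop' {u v : V} : (p : G.Walk u v) → (n i : ℕ) →
    (p.drop n).getVert i = p.getVert (n + i)
  | p, 0, i => by rw [Nat.zero_add]; cases p <;> rfl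
  | .nil, n+1, i => rfl
  | .cons h q, n+1, i => by
      show (q.drop n).getVert i = _
      rw [show n + 1 + i = (n + i) + 1 by omega, getVert_cons_succ]
      exact getVert_drop' q n i

@[simp] lemma darts_drop' {u v : V} : (p : G.Walk u v) → (n : ℕ) →
    (p.drop n).darts = p.darts.drop n
  | p, 0 => by cases p <;> rfl
  | .nil, n+1 => rfl
  | .cons h q, n+1 => by
      show (q.drop n).darts = _
      simp [darts_drop' q n]

@[simp] lemma support_drop' {u v : V} : (p : G.Walk u v) → (n : ℕ) →
    (p.drop n).support = p.support.drop (min n p.length)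
  | p, 0 => by cases p <;> rfl
  | .nil, n+1 => by simp [Walk.drop, getVert]
  | .cons h q, n+1 => by
      show (q.drop n).support = _
      simp only [support_copy, support_cons, length_cons]
      rw [support_drop' q n]
      rcases Nat.le_total n q.length with hn | hn
      · simp [min_eq_left hn, min_eq_left (by omega : n + 1 ≤ q.length + 1)]
      · simp [min_eq_right hn, min_eq_right (by omega : q.length + 1 ≤ n + 1)]

lemma darts_getElem_fst {u v : V} : (p : G.Walk u v) → (j : ℕ) → (h : j < p.darts.length) →
    (p.darts[j]).fst = p.getVert j
  | .cons h q, 0, _ => by simp [getVert_zero]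
  | .cons h q, j+1, hj => by
      show (q.darts[j]'(by simpa using hj)).fst = q.getVert j
      exact darts_getElem_fst q j (by simpa using hj)

lemma darts_getElem_snd {u v : V} : (p : G.Walk u v) → (j : ℕ) → (h : j < p.darts.length) →
    (p.darts[j]).snd = p.getVert (j+1)
  | .cons h q, 0, _ => by
      simp [getVert_cons_succ, getVert_zero]
  | .cons h q, j+1, hj => by
      show (q.darts[j]'(by simpa using hj)).snd = q.getVert (j+1)
      exact darts_getElem_snd q j (by simpa using hj)

end SimpleGraph.Walk

section Arith

private lemma arith_pos_lt {n k i : ℕ} (hk : 0 < k) (hi : i < n) :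
    i * k / n < k := by
  apply Nat.div_lt_of_lt_mul
  exact (Nat.mul_lt_mul_right hk).mpr hi

private lemma arith_gap {α ℓ n k i : ℕ} (hn : n = 2*α) (hα : 0 < α) (hk : k ≤ α * ℓ) :
    (i+1) * k / n - i * k / n ≤ (ℓ+1)/2 := by
  have hn0 : 0 < n := by omega
  have h1 : (i+1) * k = n * (i*k/n) + ((i*k) % n + k) := by
    have := Nat.div_add_mod (i*k) n
    ring_nf
    omega
  have h2 : (i+1) * k / n = i*k/n + ((i*k) % n + k)/n := by
    rw [h1, Nat.mul_add_div hn0]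
  have h3 : ((i*k) % n + k)/n ≤ (n - 1 + k)/n :=
    Nat.div_le_div_right (by have := Nat.mod_lt (i*k) hn0; omega)
  have h4 : (n - 1 + k)/n ≤ (ℓ+1)/2 := by
    have hd2 := Nat.div_add_mod (ℓ+1) 2
    have hm2 : (ℓ+1) % 2 < 2 := Nat.mod_lt _ (by omega)
    rw [Nat.div_le_iff_le_mul_add_pred hn0]
    have h5 : α * (2 * ((ℓ+1)/2)) = n * ((ℓ+1)/2) := by subst hn; ring
    have h6 : α * ℓ ≤ α * (2 * ((ℓ+1)/2)) := Nat.mul_le_mul_left _ (by omega)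
    omega
  omega

private lemma arith_mono {n k i j : ℕ} (hij : i ≤ j) : i * k / n ≤ j * k / n :=
  Nat.div_le_div_right (Nat.mul_le_mul_right _ hij)

private lemma arith_top {n k : ℕ} (hn : 0 < n) : n * k / n = k :=
  Nat.mul_div_cancel_left _ hn

private lemma getElem_idx {β : Type*} (L : List β) (a b : ℕ) (h : a < L.length) (hab : a = b) :
    L[a] = L[b]'(hab ▸ h) := by subst hab; rfl

end Arith

/-- A finset of edges `C` is (the edge set of) a cycle of the simple graph `G`. -/
def IsCycleSet {V : Type*} [DecidableEq V] (G : SimpleGraph V) (C : Finset (Sym2 V)) : Prop :=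
  ∃ (u : V) (w : G.Walk u u), w.IsCycle ∧ C = w.edges.toFinset

open SimpleGraph Walk in
lemma short_paths_eq {V : Type*} [DecidableEq V] {G : SimpleGraph V} {ℓ : ℕ}
    (hgirth : ∀ C : Finset (Sym2 V), IsCycleSet G C → ℓ ≤ C.card)
    {x y : V} (p q : G.Walk x y) (hp : p.IsPath) (hq : q.IsPath)
    (hlen : p.length + q.length < ℓ) : p = q := by
  by_contra hne
  set s : Set (Sym2 V) := {e | e ∈ p.edges ∨ e ∈ q.edges} with hs
  set H := SimpleGraph.fromEdgeSet s with hH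
  have hsub : H.edgeSet ⊆ G.edgeSet := by
    rw [hH, edgeSet_fromEdgeSet]
    rintro e ⟨(he | he), -⟩
    · exact p.edges_subset_edgeSet he
    · exact q.edges_subset_edgeSet he
  have hpe : ∀ e ∈ p.edges, e ∈ H.edgeSet := by
    intro e he
    rw [hH, edgeSet_fromEdgeSet]
    exact ⟨Or.inl he, fun hd => G.not_isDiag_of_mem_edgeSet (p.edges_subset_edgeSet he) hd⟩
  have hqe : ∀ e ∈ q.edges, e ∈ H.edgeSet := by
    intro e he
    rw [hH, edgeSet_fromEdgeSet]
    exact ⟨Or.inr he, fun hd => G.not_isDiag_of_mem_edgeSet (q.edges_subset_edgeSet he) hd⟩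
  have hne' : p.transfer H hpe ≠ q.transfer H hqe := by
    intro h
    apply hne
    have := congrArg (fun r : H.Walk x y => r.transfer G
      (fun e he => hsub (r.edges_subset_edgeSet he))) h
    simpa [Walk.transfer_transfer, Walk.transfer_self] using this
  have hnac : ¬ H.IsAcyclic := by
    intro hac
    exact hne' (congrArg Subtype.val
      (hac.path_unique ⟨p.transfer H hpe, hp.transfer hpe⟩ ⟨q.transfer H hqe, hq.transfer hqe⟩))
  rw [SimpleGraph.IsAcyclic] at hnac
  push_neg at hnac
  obtain ⟨v, c, hc⟩ := hnac
  have hce : ∀ e ∈ c.edges, e ∈ G.edgeSet := fun e he => hsub (c.edges_subset_edgeSet he)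
  have hcyc : IsCycleSet G (c.transfer G hce).edges.toFinset :=
    ⟨v, c.transfer G hce, hc.transfer hce, rfl⟩
  have h1 := hgirth _ hcyc
  have h2 : (c.transfer G hce).edges.toFinset.card ≤ p.length + q.length := by
    rw [Walk.edges_transfer]
    have hsub2 : c.edges.toFinset ⊆ (p.edges ++ q.edges).toFinset := by
      intro e he
      rw [List.mem_toFinset] at he ⊢
      rw [List.mem_append]
      have := c.edges_subset_edgeSet he
      rw [hH, edgeSet_fromEdgeSet] at this
      exact this.1
    calc c.edges.toFinset.card ≤ (p.edges ++ q.edges).toFinset.card := Finset.card_le_card hsub2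
      _ ≤ (p.edges ++ q.edges).length := List.toFinset_card_le _
      _ = p.length + q.length := by simp
  omega

open SimpleGraph Walk in
lemma cycle_edges_subset {V : Type*} [DecidableEq V] {G : SimpleGraph V}
    {ℓ α : ℕ} (hℓ : 0 < ℓ) (hα : 0 < α)
    (hgirth : ∀ C : Finset (Sym2 V), IsCycleSet G C → ℓ ≤ C.card)
    (d0 : G.Dart) {u u' : V} (w : G.Walk u u) (w' : G.Walk u' u')
    (hw : w.IsCycle) (hw' : w'.IsCycle)
    (hk : w.length ≤ α * ℓ) (hk' : w'.length ≤ α * ℓ)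
    (heq : ∀ i < 2*α, w.darts.getD (i * w.length / (2*α)) d0
      = w'.darts.getD (i * w'.length / (2*α)) d0) :
    w.edges.toFinset ⊆ w'.edges.toFinset := by
  classical
  set n := 2*α with hn
  have hn0 : 0 < n := by omega
  have hk3 : 3 ≤ w.length := hw.three_le_length
  have hk3' : 3 ≤ w'.length := hw'.three_le_length
  have hknd : w.edges.Nodup := hw.isCircuit.isTrail.edges_nodup
  have hknd' : w'.edges.Nodup := hw'.isCircuit.isTrail.edges_nodup
  set P : ℕ → ℕ := fun i => i * w.length / n with hP
  set P' : ℕ → ℕ := fun i => i * w'.length / n with hP'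
  have hdl : w.darts.length = w.length := w.length_darts
  have hdl' : w'.darts.length = w'.length := w'.length_darts
  have hel : w.edges.length = w.length := w.length_edges
  have hel' : w'.edges.length = w'.length := w'.length_edges
  have hPlt : ∀ i, i < n → P i < w.length := fun i hi => arith_pos_lt (by omega) hi
  have hPlt' : ∀ i, i < n → P' i < w'.length := fun i hi => arith_pos_lt (by omega) hi
  have hPk : P n = w.length := arith_top hn0
  have hPk' : P' n = w'.length := arith_top hn0
  have heqD : ∀ i, (hi : i < n) → w.darts[P i]'(by rw [hdl]; exact hPlt i hi)
      = w'.darts[P' i]'(by rw [hdl']; exact hPlt' i hi) := by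
    intro i hi
    have := heq i hi
    rwa [List.getD_eq_getElem _ _ (by rw [hdl]; exact hPlt i hi),
      List.getD_eq_getElem _ _ (by rw [hdl']; exact hPlt' i hi)] at this
  have hedge : ∀ {x : V} (q : G.Walk x x) (j : ℕ) (hj : j < q.edges.length),
      q.edges[j] = (q.darts[j]'(by rwa [q.length_darts, ← q.length_edges])).edge := by
    intro x q j hj
    simp [SimpleGraph.Walk.edges]
  intro e he
  rw [List.mem_toFinset] at he ⊢
  obtain ⟨j, hj, rfl⟩ := List.mem_iff_getElem.mp he
  set i := Nat.findGreatest (fun i => P i ≤ j) (n-1) with hidef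
  have hile : i ≤ n - 1 := Nat.findGreatest_le _
  have hiln : i < n := by omega
  have hjk : j < w.length := by rwa [hel] at hj
  have hPi : P i ≤ j := Nat.findGreatest_spec (P := fun i => P i ≤ j) (Nat.zero_le _)
      (by simp [hP])
  have hjlt : j < P (i+1) := by
    by_cases hc : i = n - 1
    · have h : i + 1 = n := by omega
      rw [h, hPk]; exact hjk
    · have := Nat.findGreatest_is_greatest (P := fun i => P i ≤ j) (n := n-1)
        (k := i+1) (by omega) (by omega)
      omega
  rcases Nat.eq_or_lt_of_le hPi with hcase | hcase
  · -- e is the edge of the marked dart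
    rw [hedge w j hj]
    have h1 : w.darts[j]'(by rwa [hdl]) = w'.darts[P' i]'(by rw [hdl']; exact hPlt' i hiln) := by
      rw [getElem_idx _ j (P i) (by rwa [hdl]) hcase.symm]
      exact heqD i hiln
    rw [h1]
    exact List.mem_map_of_mem (List.getElem_mem _)
  · -- e is inside the open segment
    set g := P (i+1) - P i with hg
    have hg2 : 2 ≤ g := by omega
    have hPi1k : P (i+1) ≤ w.length := by
      calc P (i+1) ≤ P n := arith_mono (by omega)
        _ = w.length := hPk
    have hg'pos : P' i < P' (i+1) := by
      rcases Nat.lt_or_ge (P' i) (P' (i+1)) with h | h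
      · exact h
      have heqP' : P' (i+1) = P' i := le_antisymm h (arith_mono (by omega))
      by_cases hc : i + 1 = n
      · have := hPlt' i hiln
        rw [hc, hPk'] at heqP'
        omega
      · have hi1n : i + 1 < n := by omega
        have h1 := heqD i hiln
        have h2 := heqD (i+1) hi1n
        have h3 : w'.darts[P' (i+1)]'(by rw [hdl']; exact hPlt' _ hi1n)
            = w'.darts[P' i]'(by rw [hdl']; exact hPlt' _ hiln) :=
          getElem_idx _ _ _ _ heqP'
        have h4 : w.darts[P (i+1)]'(by rw [hdl]; exact hPlt _ hi1n)
            = w.darts[P i]'(by rw [hdl]; exact hPlt _ hiln) := by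
          rw [h1, h2, h3]
        have h5 : w.edges[P (i+1)]'(by rw [hel]; exact hPlt _ hi1n)
            = w.edges[P i]'(by rw [hel]; exact hPlt _ hiln) := by
          rw [hedge w _ _, hedge w _ _, h4]
        have := (List.Nodup.getElem_inj_iff hknd).mp h5
        omega
    set g' := P' (i+1) - P' i with hg'
    have hg'1 : 1 ≤ g' := by omega
    have hPi1k' : P' (i+1) ≤ w'.length := by
      calc P' (i+1) ≤ P' n := arith_mono (by omega)
        _ = w'.length := hPk'
    have hgap : g ≤ (ℓ+1)/2 := arith_gap hn hα hk
    have hgap' : g' ≤ (ℓ+1)/2 := arith_gap hn hα hk'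
    clear_value g' g i
    set rest := (w.drop (P i + 1)).takeW (g - 1) with hrest
    set rest' := (w'.drop (P' i + 1)).takeW (g' - 1) with hrest'
    have hrd : rest.darts = (w.darts.drop (P i + 1)).take (g-1) := by
      rw [hrest, darts_takeW, darts_drop']
    have hrd' : rest'.darts = (w'.darts.drop (P' i + 1)).take (g'-1) := by
      rw [hrest', darts_takeW, darts_drop']
    have hrl : rest.length = g - 1 := by
      rw [← Walk.length_darts, hrd, List.length_take, List.length_drop, hdl]
      omega
    have hrl' : rest'.length = g' - 1 := by
      rw [← Walk.length_darts, hrd', List.length_take, List.length_drop, hdl']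
      omega
    have hrsupp : rest.support = (w.support.drop (P i + 1)).take g := by
      rw [hrest, support_takeW, support_drop']
      have h1 : min (P i + 1) w.length = P i + 1 := by
        have := hPlt i hiln; omega
      rw [h1]
      congr 1
      omega
    have hrsupp' : rest'.support = (w'.support.drop (P' i + 1)).take g' := by
      rw [hrest', support_takeW, support_drop']
      have h1 : min (P' i + 1) w'.length = P' i + 1 := by
        have := hPlt' i hiln; omega
      rw [h1]
      congr 1
      omega
    have hpath : rest.IsPath := by
      apply SimpleGraph.Walk.IsPath.mk'
      rw [hrsupp]
      have hnd := hw.support_nodup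
      have hdd : w.support.drop (P i + 1) = w.support.tail.drop (P i) := by
        rw [← List.drop_one, List.drop_drop]
        congr 1
        omega
      rw [hdd]
      exact hnd.sublist ((List.take_sublist _ _).trans (List.drop_sublist _ _))
    have hpath' : rest'.IsPath := by
      apply SimpleGraph.Walk.IsPath.mk'
      rw [hrsupp']
      have hnd := hw'.support_nodup
      have hdd : w'.support.drop (P' i + 1) = w'.support.tail.drop (P' i) := by
        rw [← List.drop_one, List.drop_drop]
        congr 1
        omega
      rw [hdd]
      exact hnd.sublist ((List.take_sublist _ _).trans (List.drop_sublist _ _))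
    have hstart : w.getVert (P i + 1) = w'.getVert (P' i + 1) := by
      have h1 := w.darts_getElem_snd (P i) (by rw [hdl]; exact hPlt _ hiln)
      have h2 := w'.darts_getElem_snd (P' i) (by rw [hdl']; exact hPlt' _ hiln)
      rw [← h1, ← h2, heqD i hiln]
    have hend : w.getVert (P (i+1)) = w'.getVert (P' (i+1)) := by
      by_cases hc : i + 1 = n
      · rw [hc, hPk, hPk']
        have hu : w.getVert w.length = u := w.getVert_length
        have hu' : w'.getVert w'.length = u' := w'.getVert_length
        rw [hu, hu']
        have h0 : P 0 = 0 := by simp [hP]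
        have h0' : P' 0 = 0 := by simp [hP']
        have hd0 : w.darts[0]'(by rw [hdl]; omega) = w'.darts[0]'(by rw [hdl']; omega) := by
          have e1 := getElem_idx w.darts (P 0) 0 (by rw [hdl]; exact hPlt 0 hn0) h0
          have e2 := getElem_idx w'.darts (P' 0) 0 (by rw [hdl']; exact hPlt' 0 hn0) h0'
          exact e1.symm.trans ((heqD 0 hn0).trans e2)
        have hf1 := w.darts_getElem_fst 0 (by rw [hdl]; omega)
        have hf2 := w'.darts_getElem_fst 0 (by rw [hdl']; omega)
        rw [getVert_zero] at hf1
        rw [getVert_zero] at hf2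
        rw [← hf1, hd0, hf2]
      · have hi1n : i + 1 < n := by omega
        have h1 := w.darts_getElem_fst (P (i+1)) (by rw [hdl]; exact hPlt _ hi1n)
        have h2 := w'.darts_getElem_fst (P' (i+1)) (by rw [hdl']; exact hPlt' _ hi1n)
        rw [← h1, ← h2, heqD (i+1) hi1n]
    have hb : (w.drop (P i + 1)).getVert (g - 1) = (w'.drop (P' i + 1)).getVert (g' - 1) := by
      rw [getVert_drop', getVert_drop']
      have e1 : P i + 1 + (g - 1) = P (i+1) := by omega
      have e2 : P' i + 1 + (g' - 1) = P' (i+1) := by omega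
      rw [e1, e2]
      exact hend
    set rest2 := rest'.copy hstart.symm hb.symm with hrest2
    have hpath2 : rest2.IsPath := by
      apply SimpleGraph.Walk.IsPath.mk'
      rw [hrest2, support_copy]
      exact hpath'.support_nodup
    have hrl2 : rest2.length = g' - 1 := by
      rw [hrest2, Walk.length_copy]
      exact hrl'
    have hlen2 : rest.length + rest2.length < ℓ := by
      have hD := Nat.div_add_mod (ℓ+1) 2
      have hM : (ℓ+1) % 2 < 2 := Nat.mod_lt _ (by omega)
      calc rest.length + rest2.length = (g-1) + (g'-1) := by rw [hrl, hrl2]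
        _ < ℓ := by omega
    have huniq : rest = rest2 := short_paths_eq hgirth rest rest2 hpath hpath2 hlen2
    have hmem : w.edges[j]'hj ∈ rest.edges := by
      have hre : rest.edges = rest.darts.map SimpleGraph.Dart.edge := rfl
      rw [hre, hrd, hedge w j hj]
      apply List.mem_map_of_mem
      rw [List.mem_iff_getElem]
      refine ⟨j - (P i + 1), ?_, ?_⟩
      · rw [List.length_take, List.length_drop, hdl, lt_inf_iff]
        exact ⟨by omega, by omega⟩
      · rw [List.getElem_take, List.getElem_drop]
        exact getElem_idx w.darts (P i + 1 + (j - (P i + 1))) j (by rw [hdl]; omega)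
          (by omega)
    have hmem2 : w.edges[j]'hj ∈ rest2.edges := huniq ▸ hmem
    rw [hrest2, Walk.edges_copy] at hmem2
    have hsubl : List.Sublist rest'.darts w'.darts := by
      rw [hrd']
      exact (List.take_sublist _ _).trans (List.drop_sublist _ _)
    have hsub : rest'.edges ⊆ w'.edges := (hsubl.map SimpleGraph.Dart.edge).subset
    exact hsub hmem2

/-- If `G` has at most `m` edges and no cycle of length strictly less than `ℓ`, then for every
positive integer `α` the number of cycles of `G` of length at most `α·ℓ` is at most
`(2m)^(2α)`. -/
theorem cycle_counting_bound {V : Type*} [Fintype V] [DecidableEq V]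
    (G : SimpleGraph V) [DecidableRel G.Adj] (m ℓ : ℕ) (hm : 0 < m) (hℓ : 0 < ℓ)
    (hedges : G.edgeFinset.card ≤ m)
    (hgirth : ∀ C : Finset (Sym2 V), IsCycleSet G C → ℓ ≤ C.card)
    (α : ℕ) (hα : 0 < α) :
    {C : Finset (Sym2 V) | IsCycleSet G C ∧ C.card ≤ α * ℓ}.ncard ≤ (2 * m) ^ (2 * α) := by
  classical
  set S := {C : Finset (Sym2 V) | IsCycleSet G C ∧ C.card ≤ α * ℓ} with hS
  rcases S.eq_empty_or_nonempty with h | h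
  · rw [h, Set.ncard_empty]
    exact Nat.zero_le _
  obtain ⟨C₀, hC₀⟩ := h
  obtain ⟨⟨u₀, w₀, hw₀, -⟩, -⟩ := hC₀
  have hnil : w₀.darts ≠ [] := by
    have h3 := hw₀.three_le_length
    intro hcon
    rw [← w₀.length_darts, hcon] at h3
    simp at h3
  set d0 : G.Dart := w₀.darts.head hnil with hd0
  have hlen_of_mem : ∀ {C : Finset (Sym2 V)} (h1 : IsCycleSet G C), C ∈ S →
      h1.choose_spec.choose.length ≤ α * ℓ := by
    intro C h1 hCS
    obtain ⟨hcyc, hCeq⟩ := h1.choose_spec.choose_spec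
    have hnd : h1.choose_spec.choose.edges.Nodup := hcyc.isCircuit.isTrail.edges_nodup
    have hcard : C.card = h1.choose_spec.choose.length :=
      (congrArg Finset.card hCeq).trans
        (by rw [List.toFinset_card_of_nodup hnd, SimpleGraph.Walk.length_edges])
    have h2 := hCS.2
    omega
  set f : Finset (Sym2 V) → (Fin (2*α) → G.Dart) := fun C =>
    if h : IsCycleSet G C then
      fun i => h.choose_spec.choose.darts.getD
        ((i : ℕ) * h.choose_spec.choose.length / (2*α)) d0
    else fun _ => d0 with hf
  have hcard : S.ncard ≤ (Set.univ : Set (Fin (2*α) → G.Dart)).ncard := by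
    apply Set.ncard_le_ncard_of_injOn f (fun a _ => Set.mem_univ _) _ Set.finite_univ
    intro C hC C' hC' hfe
    have h1 : IsCycleSet G C := hC.1
    have h1' : IsCycleSet G C' := hC'.1
    have hfc : f C = fun i : Fin (2*α) => h1.choose_spec.choose.darts.getD
        ((i : ℕ) * h1.choose_spec.choose.length / (2*α)) d0 := by
      rw [hf]; exact dif_pos h1
    have hfc' : f C' = fun i : Fin (2*α) => h1'.choose_spec.choose.darts.getD
        ((i : ℕ) * h1'.choose_spec.choose.length / (2*α)) d0 := by
      rw [hf]; exact dif_pos h1'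
    rw [hfc, hfc'] at hfe
    have heqi : ∀ i < 2*α, h1.choose_spec.choose.darts.getD
        (i * h1.choose_spec.choose.length / (2*α)) d0
        = h1'.choose_spec.choose.darts.getD (i * h1'.choose_spec.choose.length / (2*α)) d0 := by
      intro i hi
      exact congrFun hfe ⟨i, hi⟩
    obtain ⟨hcyc, hCeq⟩ := h1.choose_spec.choose_spec
    obtain ⟨hcyc', hCeq'⟩ := h1'.choose_spec.choose_spec
    have hl1 := hlen_of_mem h1 hC
    have hl1' := hlen_of_mem h1' hC'
    rw [hCeq, hCeq']
    apply Finset.Subset.antisymm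
    · exact cycle_edges_subset hℓ hα hgirth d0 _ _ hcyc hcyc' hl1 hl1' heqi
    · exact cycle_edges_subset hℓ hα hgirth d0 _ _ hcyc' hcyc hl1' hl1
        (fun i hi => (heqi i hi).symm)
  rw [Set.ncard_univ] at hcard
  calc S.ncard ≤ Nat.card (Fin (2*α) → G.Dart) := hcard
    _ = (Fintype.card G.Dart)^(2*α) := by
        rw [Nat.card_eq_fintype_card, Fintype.card_fun, Fintype.card_fin]
    _ ≤ (2*m)^(2*α) := by
        apply Nat.pow_le_pow_left
        rw [G.dart_card_eq_twice_card_edges]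
        omega
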